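/- Let K be a field, V a K-vector space of dimension at most 2, and Q a quadratic form on V. Then for every element x of the Clifford algebra of Q, the product x * reverse (involute x) is a scalar, i.e. it lies in the range of algebraMap K (CliffordAlgebra Q). (This scalar is the determinant of x; this is the paper's one- and two-dimensional determinant formula Det(A) = A⟦A⟧₁₂.) -/

import Mathlib

open CliffordAlgebra

section Aux
variable {K A : Type*} [CommRing K] [Ring A] [Algebra K A]

private lemma aux_mul (u w : A) (α β p : K)
    (hu : u * u = algebraMap K A α) (hw : w * w = algebraMap K A β)
    (hc : w * u = algebraMap K A p - u * w) (a b c d : K) :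
    (algebraMap K A a + b • u + c • w + d • (u * w)) *
      (algebraMap K A a - b • u - c • w + d • (w * u)) =
    algebraMap K A (a*a - b*b*α - c*c*β + d*d*(α*β) + (a*d - b*c)*p) := by
  have h1 : ∀ x : A, u * (u * x) = algebraMap K A α * x := by
    intro x; rw [← mul_assoc, hu]
  have h2 : ∀ x : A, w * (w * x) = algebraMap K A β * x := by
    intro x; rw [← mul_assoc, hw]
  have h3 : ∀ x : A, w * (u * x) = algebraMap K A p * x - u * (w * x) := by
    intro x; rw [← mul_assoc, hc, sub_mul, mul_assoc]
  simp only [mul_add, add_mul, mul_sub, sub_mul, smul_mul_assoc, mul_smul_comm, mul_assoc,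
    hu, hw, hc, h1, h2, h3, Algebra.commutes, smul_sub, smul_add, smul_smul,
    Algebra.smul_def, ← map_mul, ← map_add, ← map_sub]
  have hs : ∀ (s : K) (x : A), x * algebraMap K A s = s • x := fun s x => by
    rw [← Algebra.commutes, Algebra.smul_def]
  have hs1 : ∀ (s : K), algebraMap K A s = s • (1:A) := fun s => by
    rw [Algebra.smul_def, mul_one]
  ring_nf
  simp only [mul_assoc, hs, hs1, smul_smul]
  module

private lemma aux_span (u w : A) (α β p : K)
    (hu : u * u = algebraMap K A α) (hw : w * w = algebraMap K A β)
    (hc : w * u = algebraMap K A p - u * w) :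
    ∀ x y : A, x ∈ Submodule.span K ({1, u, w, u * w} : Set A) →
      y ∈ Submodule.span K ({1, u, w, u * w} : Set A) →
      x * y ∈ Submodule.span K ({1, u, w, u * w} : Set A) := by
  set M := Submodule.span K ({1, u, w, u * w} : Set A) with hM
  have h1 : (1 : A) ∈ M := Submodule.subset_span (by simp)
  have hU : u ∈ M := Submodule.subset_span (by simp)
  have hW : w ∈ M := Submodule.subset_span (by simp)
  have hUW : u * w ∈ M := Submodule.subset_span (by simp)
  have hsc : ∀ (s : K) (x : A), x ∈ M → algebraMap K A s * x ∈ M := fun s x hx => by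
    rw [← Algebra.smul_def]; exact M.smul_mem s hx
  have hscM : ∀ s : K, algebraMap K A s ∈ M := fun s => by
    rw [Algebra.algebraMap_eq_smul_one]; exact M.smul_mem s h1
  have e1 : u * (u * w) = algebraMap K A α * w := by rw [← mul_assoc, hu]
  have e2 : (u * w) * u = algebraMap K A p * u - algebraMap K A α * w := by
    rw [mul_assoc, hc, mul_sub, ← Algebra.commutes, ← mul_assoc, hu]
  have e3 : (u * w) * w = algebraMap K A β * u := by
    rw [mul_assoc, hw, ← Algebra.commutes]
  have e4 : w * (u * w) = algebraMap K A p * w - algebraMap K A β * u := by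
    rw [← mul_assoc, hc, sub_mul, mul_assoc, hw, ← Algebra.commutes]
  have e5 : (u * w) * (u * w) = algebraMap K A p * (u * w) - algebraMap K A (α * β) := by
    rw [mul_assoc u w (u * w), e4, mul_sub u, ← mul_assoc u (algebraMap K A p) w,
      ← Algebra.commutes p u, mul_assoc (algebraMap K A p) u w,
      ← mul_assoc u (algebraMap K A β) u, ← Algebra.commutes β u,
      mul_assoc (algebraMap K A β) u u, hu, ← map_mul, mul_comm β α]
  have key : ∀ y ∈ ({1, u, w, u * w} : Set A), ∀ x ∈ ({1, u, w, u * w} : Set A), x * y ∈ M := by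
    rintro y (rfl | rfl | rfl | rfl) x (rfl | rfl | rfl | rfl) <;>
      (try simp only [one_mul, mul_one]) <;>
      first
        | exact h1 | exact hU | exact hW | exact hUW
        | (rw [hu]; exact hscM α)
        | (rw [hw]; exact hscM β)
        | (rw [hc]; exact M.sub_mem (hscM p) hUW)
        | (rw [e1]; exact hsc α _ hW)
        | (rw [e2]; exact M.sub_mem (hsc p _ hU) (hsc α _ hW))
        | (rw [e3]; exact hsc β _ hU)
        | (rw [e4]; exact M.sub_mem (hsc p _ hW) (hsc β _ hU))
        | (rw [e5]; exact M.sub_mem (hsc p _ hUW) (hscM (α * β)))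
  intro x y hx hy
  induction hy using Submodule.span_induction with
  | mem z hz =>
    induction hx using Submodule.span_induction with
    | mem t ht => exact key z hz t ht
    | zero => simp
    | add a b _ _ ha hb => rw [add_mul]; exact M.add_mem ha hb
    | smul s a _ ha => rw [smul_mul_assoc]; exact M.smul_mem s ha
  | zero => simp
  | add a b _ _ ha hb => rw [mul_add]; exact M.add_mem ha hb
  | smul s a _ ha => rw [mul_smul_comm]; exact M.smul_mem s ha

private lemma aux_coeffs (u w : A) {x : A}
    (hx : x ∈ Submodule.span K ({1, u, w, u * w} : Set A)) :
    ∃ a b c d : K, x = algebraMap K A a + b • u + c • w + d • (u * w) := by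
  rw [show ({1, u, w, u * w} : Set A) = insert 1 (insert u (insert w {u * w})) from rfl,
    Submodule.mem_span_insert] at hx
  obtain ⟨a, z, hz, rfl⟩ := hx
  rw [Submodule.mem_span_insert] at hz
  obtain ⟨b, z', hz', rfl⟩ := hz
  rw [Submodule.mem_span_insert] at hz'
  obtain ⟨c, z'', hz'', rfl⟩ := hz'
  rw [Submodule.mem_span_singleton] at hz''
  obtain ⟨d, rfl⟩ := hz''
  exact ⟨a, b, c, d, by rw [Algebra.algebraMap_eq_smul_one]; module⟩
end Aux

/-- In dimension at most 2, `x * reverse (involute x)` (the paper's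
`A ⟦A⟧₁₂`) is a scalar: the 1- and 2-dimensional determinant formula. -/
theorem det_dim_le_two (K V : Type*) [Field K] [AddCommGroup V] [Module K V]
    [FiniteDimensional K V] (hdim : Module.finrank K V ≤ 2)
    (Q : QuadraticForm K V) (x : CliffordAlgebra Q) :
    x * reverse (involute x) ∈ Set.range (algebraMap K (CliffordAlgebra Q)) := by
  classical
  -- choose two vectors spanning `V`
  set n := Module.finrank K V with hn
  let bV := Module.finBasis K V
  let v0 : V := if h : 0 < n then bV ⟨0, h⟩ else 0
  let v1 : V := if h : 1 < n then bV ⟨1, h⟩ else 0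
  have hspanV : (⊤ : Submodule K V) ≤ Submodule.span K ({v0, v1} : Set V) := by
    rw [← bV.span_eq]
    refine Submodule.span_le.2 ?_
    rintro _ ⟨i, rfl⟩
    have hi2 : (i : ℕ) < 2 := lt_of_lt_of_le i.isLt hdim
    interval_cases h : (i : ℕ)
    · have h0 : 0 < n := h ▸ i.isLt
      have : bV i = v0 := by simp only [v0, dif_pos h0]; congr 1; exact Fin.ext h
      rw [this]; exact Submodule.subset_span (by simp)
    · have h1 : 1 < n := h ▸ i.isLt
      have : bV i = v1 := by simp only [v1, dif_pos h1]; congr 1; exact Fin.ext h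
      rw [this]; exact Submodule.subset_span (by simp)
  set u := ι Q v0
  set w := ι Q v1
  have hu : u * u = algebraMap K _ (Q v0) := ι_sq_scalar Q v0
  have hw : w * w = algebraMap K _ (Q v1) := ι_sq_scalar Q v1
  have hc : w * u = algebraMap K _ (QuadraticMap.polar Q v1 v0) - u * w :=
    ι_mul_ι_comm v1 v0
  -- every element lies in the span of {1, u, w, u*w}
  have hmem : ∀ y : CliffordAlgebra Q,
      y ∈ Submodule.span K ({1, u, w, u * w} : Set (CliffordAlgebra Q)) := by
    intro y
    set M := Submodule.span K ({1, u, w, u * w} : Set (CliffordAlgebra Q))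
    have h1 : (1 : CliffordAlgebra Q) ∈ M := Submodule.subset_span (by simp)
    induction y using CliffordAlgebra.induction with
    | algebraMap r =>
      rw [Algebra.algebraMap_eq_smul_one]; exact M.smul_mem r h1
    | ι v =>
      obtain ⟨a, b, hab⟩ := Submodule.mem_span_pair.1 (hspanV (Submodule.mem_top (x := v)))
      rw [← hab, map_add, map_smul, map_smul]
      exact M.add_mem (M.smul_mem a (Submodule.subset_span (by simp [u])))
        (M.smul_mem b (Submodule.subset_span (by simp [w])))
    | mul y z hy hz => exact aux_span u w _ _ _ hu hw hc y z hy hz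
    | add y z hy hz => exact M.add_mem hy hz
  obtain ⟨a, b, c, d, rfl⟩ := aux_coeffs u w (hmem x)
  have hconj : reverse (involute (algebraMap K (CliffordAlgebra Q) a + b • u + c • w + d • (u * w)))
      = algebraMap K (CliffordAlgebra Q) a - b • u - c • w + d • (w * u) := by
    simp only [map_add, map_smul, map_neg, AlgHom.commutes, involute_ι, map_mul, neg_mul_neg,
      reverse.commutes, reverse_ι, reverse.map_mul, smul_neg, neg_smul, u, w]
    abel
  rw [hconj, aux_mul u w _ _ _ hu hw hc a b c d]
  exact ⟨_, rfl⟩
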